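/- Let ℓ be a nonnegative integer. Define 𝔊(x,y,z) = Q_{4ℓ+1}(x,y)·sin z + Q_{4ℓ+1}(x,z)·sin y + Q_{4ℓ+1}(z,x)·cos y − Q_{4ℓ+1}(y,x)·cos z, and let V be the vector field on ℝ³ given by V(x,y,z) = (𝔊(x,y,z), 𝔊(y,z,x), 𝔊(z,x,y)). Then V satisfies the Beltrami equation ∇×V = V. -/

import Mathlib

noncomputable section

open Real

/-- The standard harmonic polynomial `P_n(x,y) = Re((x+iy)^n)`. -/
def polyP (n : ℕ) (x y : ℝ) : ℝ := ((x + y * Complex.I) ^ n).re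

/-- The standard harmonic polynomial `Q_n(x,y) = Im((x+iy)^n)`. -/
def polyQ (n : ℕ) (x y : ℝ) : ℝ := ((x + y * Complex.I) ^ n).im

/-- Partial derivative in the `i`-th coordinate direction. -/
def pd (i : Fin 3) (F : (Fin 3 → ℝ) → ℝ) : (Fin 3 → ℝ) → ℝ :=
  fun v => deriv (fun t => F (Function.update v i t)) (v i)

/-- Divergence of a vector field on ℝ³. -/
def div3 (V : (Fin 3 → ℝ) → (Fin 3 → ℝ)) : (Fin 3 → ℝ) → ℝ :=
  fun v => pd 0 (fun w => V w 0) v + pd 1 (fun w => V w 1) v + pd 2 (fun w => V w 2) v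

/-- Curl of a vector field on ℝ³. -/
def curl3 (V : (Fin 3 → ℝ) → (Fin 3 → ℝ)) : (Fin 3 → ℝ) → (Fin 3 → ℝ) :=
  fun v => ![pd 1 (fun w => V w 2) v - pd 2 (fun w => V w 1) v,
             pd 2 (fun w => V w 0) v - pd 0 (fun w => V w 2) v,
             pd 0 (fun w => V w 1) v - pd 1 (fun w => V w 0) v]

/-- Laplacian of a scalar function on ℝ³. -/
def lap3 (F : (Fin 3 → ℝ) → ℝ) : (Fin 3 → ℝ) → ℝ :=
  fun v => pd 0 (pd 0 F) v + pd 1 (pd 1 F) v + pd 2 (pd 2 F) v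

lemma hasDerivAt_im' {f : ℝ → ℂ} {f' : ℂ} {x : ℝ} (h : HasDerivAt f f' x) :
    HasDerivAt (fun t => (f t).im) f'.im x := by
  simpa [Function.comp_def] using (Complex.imCLM.hasFDerivAt.comp_hasDerivAt x h)

lemma hasDerivAt_polyQ_fst (n : ℕ) (x y : ℝ) :
    HasDerivAt (fun t => polyQ (n + 1) t y) ((n + 1) * polyQ n x y) x := by
  have h : HasDerivAt (fun w : ℂ => (w + y * Complex.I) ^ (n + 1))
      ((n + 1) * ((x : ℂ) + y * Complex.I) ^ n) (x : ℝ) := by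
    simpa using (((hasDerivAt_id ((x : ℝ) : ℂ)).add_const ((y:ℝ) * Complex.I)).fun_pow (n+1))
  have := hasDerivAt_im' h.comp_ofReal
  simpa [polyQ] using this

lemma hasDerivAt_polyQ_snd (n : ℕ) (x y : ℝ) :
    HasDerivAt (fun t => polyQ (n + 1) x t) ((n + 1) * polyP n x y) y := by
  have h : HasDerivAt (fun w : ℂ => ((x:ℝ) + w * Complex.I) ^ (n + 1))
      (((n + 1) * ((x : ℂ) + y * Complex.I) ^ n) * Complex.I) (y : ℝ) := by
    have h1 : HasDerivAt (fun w : ℂ => (x:ℂ) + w * Complex.I) Complex.I (y:ℝ) := by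
      simpa using (((hasDerivAt_id ((y:ℝ):ℂ)).mul_const Complex.I).const_add (x:ℂ))
    simpa using (h1.fun_pow (n+1))
  have := hasDerivAt_im' h.comp_ofReal
  simp only [polyQ, polyP]
  convert this using 1
  simp [Complex.mul_im]

lemma key_conj (l : ℕ) (a b : ℝ) :
    ((b:ℂ) + a * Complex.I) ^ (4*l) = (starRingEnd ℂ) (((a:ℂ) + b * Complex.I) ^ (4*l)) := by
  have h : ((b:ℂ) + a * Complex.I) = Complex.I * (starRingEnd ℂ) ((a:ℂ) + b * Complex.I) := by
    simp [map_add, map_mul, Complex.conj_ofReal, Complex.conj_I]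
    linear_combination (b:ℂ) * Complex.I_sq
  rw [h, mul_pow, ← map_pow, pow_mul, show Complex.I ^ 4 = 1 by
    rw [show (4:ℕ) = 2*2 from rfl, pow_mul, Complex.I_sq]; norm_num, one_pow, one_mul]

lemma polyP_swap (l : ℕ) (a b : ℝ) : polyP (4*l) b a = polyP (4*l) a b := by
  simp only [polyP]; rw [key_conj l a b, Complex.conj_re]

lemma polyQ_swap (l : ℕ) (a b : ℝ) : polyQ (4*l) b a = - polyQ (4*l) a b := by
  simp only [polyQ]; rw [key_conj l a b, Complex.conj_im]

/-- Derivative of `G` in its second argument. -/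
lemma hasDerivAt_G2 (m : ℕ) (x y z : ℝ) :
    HasDerivAt (fun t => polyQ (m+1) x t * Real.sin z + polyQ (m+1) x z * Real.sin t
        + polyQ (m+1) z x * Real.cos t - polyQ (m+1) t x * Real.cos z)
      ((m+1) * polyP m x y * Real.sin z + polyQ (m+1) x z * Real.cos y
        - polyQ (m+1) z x * Real.sin y - (m+1) * polyQ m y x * Real.cos z) y := by
  have h := ((((hasDerivAt_polyQ_snd m x y).mul_const (Real.sin z)).add
      ((Real.hasDerivAt_sin y).const_mul (polyQ (m+1) x z))).add
      ((Real.hasDerivAt_cos y).const_mul (polyQ (m+1) z x))).sub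
      ((hasDerivAt_polyQ_fst m y x).mul_const (Real.cos z))
  refine h.congr_deriv ?_

  ring

/-- Derivative of `G` in its third argument. -/
lemma hasDerivAt_G3 (m : ℕ) (x y z : ℝ) :
    HasDerivAt (fun t => polyQ (m+1) x y * Real.sin t + polyQ (m+1) x t * Real.sin y
        + polyQ (m+1) t x * Real.cos y - polyQ (m+1) y x * Real.cos t)
      (polyQ (m+1) x y * Real.cos z + (m+1) * polyP m x z * Real.sin y
        + (m+1) * polyQ m z x * Real.cos y + polyQ (m+1) y x * Real.sin z) z := by
  have h := ((((Real.hasDerivAt_sin z).const_mul (polyQ (m+1) x y)).add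
      ((hasDerivAt_polyQ_snd m x z).mul_const (Real.sin y))).add
      ((hasDerivAt_polyQ_fst m z x).mul_const (Real.cos y))).sub
      ((Real.hasDerivAt_cos z).const_mul (polyQ (m+1) y x))
  refine h.congr_deriv ?_

  ring

/-- the tetrahedral field of order `4ℓ+1` satisfies `∇×V = V`. -/
theorem beltrami_tetrahedral_first (l : ℕ) :
    let G : ℝ → ℝ → ℝ → ℝ := fun x y z =>
      polyQ (4 * l + 1) x y * Real.sin z + polyQ (4 * l + 1) x z * Real.sin y
        + polyQ (4 * l + 1) z x * Real.cos y - polyQ (4 * l + 1) y x * Real.cos z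
    let V : (Fin 3 → ℝ) → (Fin 3 → ℝ) := fun v =>
      ![G (v 0) (v 1) (v 2), G (v 1) (v 2) (v 0), G (v 2) (v 0) (v 1)]
    ∀ v, curl3 V v = V v := by
  intro G V v
  have hn : 4 * l + 1 = 4 * l + 1 := rfl
  -- the six partial derivatives
  have e12 : pd 1 (fun w => V w 2) v
      = (polyQ (4*l+1) (v 2) (v 0) * Real.cos (v 1) + (4*l+1) * polyP (4*l) (v 2) (v 1) * Real.sin (v 0)
        + (4*l+1) * polyQ (4*l) (v 1) (v 2) * Real.cos (v 0) + polyQ (4*l+1) (v 0) (v 2) * Real.sin (v 1)) := by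
    have e : (fun t => V (Function.update v 1 t) 2) = fun t =>
        polyQ (4*l+1) (v 2) (v 0) * Real.sin t + polyQ (4*l+1) (v 2) t * Real.sin (v 0)
        + polyQ (4*l+1) t (v 2) * Real.cos (v 0) - polyQ (4*l+1) (v 0) (v 2) * Real.cos t := by
      funext t; simp [V, G, Function.update]
    rw [pd, e]
    exact_mod_cast (hasDerivAt_G3 (4*l) (v 2) (v 0) (v 1)).deriv
  have e21 : pd 2 (fun w => V w 1) v
      = ((4*l+1) * polyP (4*l) (v 1) (v 2) * Real.sin (v 0) + polyQ (4*l+1) (v 1) (v 0) * Real.cos (v 2)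
        - polyQ (4*l+1) (v 0) (v 1) * Real.sin (v 2) - (4*l+1) * polyQ (4*l) (v 2) (v 1) * Real.cos (v 0)) := by
    have e : (fun t => V (Function.update v 2 t) 1) = fun t =>
        polyQ (4*l+1) (v 1) t * Real.sin (v 0) + polyQ (4*l+1) (v 1) (v 0) * Real.sin t
        + polyQ (4*l+1) (v 0) (v 1) * Real.cos t - polyQ (4*l+1) t (v 1) * Real.cos (v 0) := by
      funext t; simp [V, G, Function.update]
    rw [pd, e]
    exact_mod_cast (hasDerivAt_G2 (4*l) (v 1) (v 2) (v 0)).deriv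
  have e20 : pd 2 (fun w => V w 0) v
      = (polyQ (4*l+1) (v 0) (v 1) * Real.cos (v 2) + (4*l+1) * polyP (4*l) (v 0) (v 2) * Real.sin (v 1)
        + (4*l+1) * polyQ (4*l) (v 2) (v 0) * Real.cos (v 1) + polyQ (4*l+1) (v 1) (v 0) * Real.sin (v 2)) := by
    have e : (fun t => V (Function.update v 2 t) 0) = fun t =>
        polyQ (4*l+1) (v 0) (v 1) * Real.sin t + polyQ (4*l+1) (v 0) t * Real.sin (v 1)
        + polyQ (4*l+1) t (v 0) * Real.cos (v 1) - polyQ (4*l+1) (v 1) (v 0) * Real.cos t := by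
      funext t; simp [V, G, Function.update]
    rw [pd, e]
    exact_mod_cast (hasDerivAt_G3 (4*l) (v 0) (v 1) (v 2)).deriv
  have e02 : pd 0 (fun w => V w 2) v
      = ((4*l+1) * polyP (4*l) (v 2) (v 0) * Real.sin (v 1) + polyQ (4*l+1) (v 2) (v 1) * Real.cos (v 0)
        - polyQ (4*l+1) (v 1) (v 2) * Real.sin (v 0) - (4*l+1) * polyQ (4*l) (v 0) (v 2) * Real.cos (v 1)) := by
    have e : (fun t => V (Function.update v 0 t) 2) = fun t =>
        polyQ (4*l+1) (v 2) t * Real.sin (v 1) + polyQ (4*l+1) (v 2) (v 1) * Real.sin t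
        + polyQ (4*l+1) (v 1) (v 2) * Real.cos t - polyQ (4*l+1) t (v 2) * Real.cos (v 1) := by
      funext t; simp [V, G, Function.update]
    rw [pd, e]
    exact_mod_cast (hasDerivAt_G2 (4*l) (v 2) (v 0) (v 1)).deriv
  have e01 : pd 0 (fun w => V w 1) v
      = (polyQ (4*l+1) (v 1) (v 2) * Real.cos (v 0) + (4*l+1) * polyP (4*l) (v 1) (v 0) * Real.sin (v 2)
        + (4*l+1) * polyQ (4*l) (v 0) (v 1) * Real.cos (v 2) + polyQ (4*l+1) (v 2) (v 1) * Real.sin (v 0)) := by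
    have e : (fun t => V (Function.update v 0 t) 1) = fun t =>
        polyQ (4*l+1) (v 1) (v 2) * Real.sin t + polyQ (4*l+1) (v 1) t * Real.sin (v 2)
        + polyQ (4*l+1) t (v 1) * Real.cos (v 2) - polyQ (4*l+1) (v 2) (v 1) * Real.cos t := by
      funext t; simp [V, G, Function.update]
    rw [pd, e]
    exact_mod_cast (hasDerivAt_G3 (4*l) (v 1) (v 2) (v 0)).deriv
  have e10 : pd 1 (fun w => V w 0) v
      = ((4*l+1) * polyP (4*l) (v 0) (v 1) * Real.sin (v 2) + polyQ (4*l+1) (v 0) (v 2) * Real.cos (v 1)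
        - polyQ (4*l+1) (v 2) (v 0) * Real.sin (v 1) - (4*l+1) * polyQ (4*l) (v 1) (v 0) * Real.cos (v 2)) := by
    have e : (fun t => V (Function.update v 1 t) 0) = fun t =>
        polyQ (4*l+1) (v 0) t * Real.sin (v 2) + polyQ (4*l+1) (v 0) (v 2) * Real.sin t
        + polyQ (4*l+1) (v 2) (v 0) * Real.cos t - polyQ (4*l+1) t (v 0) * Real.cos (v 2) := by
      funext t; simp [V, G, Function.update]
    rw [pd, e]
    exact_mod_cast (hasDerivAt_G2 (4*l) (v 0) (v 1) (v 2)).deriv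
  funext i
  fin_cases i
  · show pd 1 (fun w => V w 2) v - pd 2 (fun w => V w 1) v = G (v 0) (v 1) (v 2)
    rw [e12, e21]
    simp only [G]
    rw [polyP_swap l (v 1) (v 2), polyQ_swap l (v 2) (v 1)]
    ring
  · show pd 2 (fun w => V w 0) v - pd 0 (fun w => V w 2) v = G (v 1) (v 2) (v 0)
    rw [e20, e02]
    simp only [G]
    rw [polyP_swap l (v 2) (v 0), polyQ_swap l (v 0) (v 2)]
    ring
  · show pd 0 (fun w => V w 1) v - pd 1 (fun w => V w 0) v = G (v 2) (v 0) (v 1)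
    rw [e01, e10]
    simp only [G]
    rw [polyP_swap l (v 0) (v 1), polyQ_swap l (v 1) (v 0)]
    ring
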